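/- For an integer μ ≥ 1, let Q_μ be the 103×103 real matrix with rows and columns indexed by x₁, x₂, x₃ and x₄, …, x₁₀₃, whose only nonzero entries are Q_μ(x₂,x₁) = 1 and, for each i with 4 ≤ i ≤ 103, Q_μ(x_i,x₃) = 2^{−μ} and Q_μ(x_i,x₂) = 1 − 2^{−μ}. Then I − Q_μ is invertible and the average of the entries of m = (I − Q_μ)⁻¹·𝟙 over all 103 transient states equals (304 − 100·2^{−μ})/103. This quantity is strictly increasing in μ and equals 254/103 for μ = 1; hence the a-scalability 254/(304 − 100·2^{−μ}) is strictly less than 1 for every μ ≥ 2. (Q_μ is the transient submatrix of the (1+μ) elitist EA of the paper's second counterexample with ε = 0, showing that increasing the population size increases the average expected number of generations to find the optimum.) -/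

import Mathlib

open Matrix

noncomputable def Qmu (μ : ℕ) : Matrix (Fin 103) (Fin 103) ℝ := fun i j =>
  if i = 1 ∧ j = 0 then 1
  else if 3 ≤ (i : ℕ) ∧ j = 2 then (1 / 2 : ℝ) ^ μ
  else if 3 ≤ (i : ℕ) ∧ j = 1 then 1 - (1 / 2 : ℝ) ^ μ
  else 0

noncomputable def mvec (t : ℝ) : Fin 103 → ℝ := fun i =>
  if i = 0 then 1 else if i = 1 then 2 else if i = 2 then 1 else 3 - t

lemma sum_two (f : Fin 103 → ℝ) (h : ∀ k, k ≠ 1 → k ≠ 2 → f k = 0) :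
    ∑ k, f k = f 1 + f 2 := by
  have : ∑ k, f k = ∑ k ∈ ({1, 2} : Finset (Fin 103)), f k := by
    refine (Finset.sum_subset (Finset.subset_univ _) ?_).symm
    intro x _ hx
    simp only [Finset.mem_insert, Finset.mem_singleton, not_or] at hx
    exact h x hx.1 hx.2
  rw [this, Finset.sum_pair (by decide)]

/-- for `μ ≥ 1`, `I - Q_μ` is invertible and the average over the `103`
transient states of the expected absorption times `m = (I - Q_μ)⁻¹ · 𝟙` equals
`(304 - 100·2⁻ᵘ)/103`; this quantity is strictly increasing in `μ`, equals `254/103`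
at `μ = 1`, and so the a-scalability `254/(304 - 100·2⁻ᵘ)` is `< 1` for `μ ≥ 2`. -/
theorem stmt_14 (μ : ℕ) (hμ : 1 ≤ μ) :
    IsUnit (1 - Qmu μ) ∧
    (∑ X, ((1 - Qmu μ)⁻¹ *ᵥ (fun _ => 1)) X) / 103 =
      (304 - 100 * (1 / 2 : ℝ) ^ μ) / 103 ∧
    (∀ ν : ℕ, μ < ν →
      (304 - 100 * (1 / 2 : ℝ) ^ μ) / 103 < (304 - 100 * (1 / 2 : ℝ) ^ ν) / 103) ∧
    (304 - 100 * (1 / 2 : ℝ) ^ (1 : ℕ)) / 103 = 254 / 103 ∧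
    (2 ≤ μ → (254 : ℝ) / (304 - 100 * (1 / 2 : ℝ) ^ μ) < 1) := by
  set t : ℝ := (1 / 2 : ℝ) ^ μ with ht
  -- Q² explicitly
  have hQ2 : Qmu μ * Qmu μ =
      Matrix.of (fun (i j : Fin 103) => if 3 ≤ (i : ℕ) ∧ j = 0 then 1 - t else 0) := by
    ext i j
    rw [Matrix.mul_apply]
    rw [Fintype.sum_eq_single (1 : Fin 103)]
    · by_cases h3 : 3 ≤ (i : ℕ)
      · have hi1 : i ≠ 1 := by intro h; rw [h] at h3; simp at h3
        simp [Qmu, h3, hi1]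
        by_cases hj : j = 0 <;> simp [hj, ht, one_div, inv_pow]
      · have hi1 : ¬ (i = 1 ∧ (1 : Fin 103) = 0) := by
          rintro ⟨-, h⟩; exact absurd h (by decide)
        simp [Qmu, h3, hi1]
    · intro k hk
      by_cases h3 : 3 ≤ (k : ℕ)
      · have h0 : k ≠ 0 := by intro h; rw [h] at h3; simp at h3
        have h1 : k ≠ 1 := by intro h; rw [h] at h3; simp at h3
        have h2 : k ≠ 2 := by intro h; rw [h] at h3; simp at h3
        have : Qmu μ i k = 0 := by simp [Qmu, h0, h1, h2]
        rw [this, zero_mul]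
      · have hk1 : (k : ℕ) ≠ 1 := fun h => hk (Fin.ext h)
        have : (k : ℕ) = 0 ∨ (k : ℕ) = 2 := by
          have := k.isLt; omega
        rcases this with h | h
        · have hk0 : k = 0 := Fin.ext h
          have : Qmu μ k j = 0 := by simp [Qmu, hk0]
          rw [this, mul_zero]
        · have hk2 : k = 2 := Fin.ext h
          have : Qmu μ k j = 0 := by simp [Qmu, hk2]
          rw [this, mul_zero]
  have hQ3 : Qmu μ ^ 3 = 0 := by
    have : Qmu μ ^ 3 = (Qmu μ * Qmu μ) * Qmu μ := by rw [pow_succ, sq]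
    rw [this, hQ2]
    ext i j
    rw [Matrix.mul_apply]
    apply Finset.sum_eq_zero
    intro k _
    by_cases hk : k = 0
    · have : Qmu μ k j = 0 := by simp [Qmu, hk]
      rw [this, mul_zero]
    · simp [Matrix.of_apply, hk]
  have hU : IsUnit (1 - Qmu μ) := IsNilpotent.isUnit_one_sub ⟨3, hQ3⟩
  -- (1-Q) *ᵥ m = 1
  have hm : (1 - Qmu μ) *ᵥ mvec t = fun _ => 1 := by
    funext i
    rw [Matrix.sub_mulVec, Matrix.one_mulVec]
    simp only [Pi.sub_apply]
    have hsum : (Qmu μ *ᵥ mvec t) i = ∑ k, Qmu μ i k * mvec t k := rfl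
    by_cases h3 : 3 ≤ (i : ℕ)
    · have hi0 : i ≠ 0 := by intro h; rw [h] at h3; simp at h3
      have hi1 : i ≠ 1 := by intro h; rw [h] at h3; simp at h3
      have hi2 : i ≠ 2 := by intro h; rw [h] at h3; simp at h3
      have : (Qmu μ *ᵥ mvec t) i = Qmu μ i 1 * mvec t 1 + Qmu μ i 2 * mvec t 2 := by
        rw [hsum]
        apply sum_two
        intro k hk1 hk2
        have : Qmu μ i k = 0 := by
          simp only [Qmu]
          rw [if_neg, if_neg, if_neg]
          · rintro ⟨-, h⟩; exact hk1 h
          · rintro ⟨-, h⟩; exact hk2 h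
          · rintro ⟨h, -⟩; exact hi1 h
        rw [this, zero_mul]
      rw [this]
      simp [Qmu, mvec, h3, hi0, hi1, hi2]
      rw [ht, one_div, inv_pow]; ring
    · have : (i : ℕ) = 0 ∨ (i : ℕ) = 1 ∨ (i : ℕ) = 2 := by
        have := i.isLt; omega
      rcases this with h | h | h
      · have hi : i = 0 := Fin.ext h
        have : (Qmu μ *ᵥ mvec t) i = 0 := by
          rw [hsum]; apply Finset.sum_eq_zero; intro k _
          have : Qmu μ i k = 0 := by simp [Qmu, hi]
          rw [this, zero_mul]
        rw [this, hi]; simp [mvec]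
      · have hi : i = 1 := Fin.ext h
        have : (Qmu μ *ᵥ mvec t) i = Qmu μ i 0 * mvec t 0 := by
          rw [hsum]
          apply Fintype.sum_eq_single
          intro k hk
          have : Qmu μ i k = 0 := by simp [Qmu, hi, hk]
          rw [this, zero_mul]
        rw [this, hi]; simp [Qmu, mvec]; norm_num
      · have hi : i = 2 := Fin.ext h
        have : (Qmu μ *ᵥ mvec t) i = 0 := by
          rw [hsum]; apply Finset.sum_eq_zero; intro k _
          have : Qmu μ i k = 0 := by simp [Qmu, hi]
          rw [this, zero_mul]
        rw [this, hi]; simp [mvec]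
  -- (1-Q)⁻¹ *ᵥ 1 = m
  have hdet : IsUnit (1 - Qmu μ).det := (Matrix.isUnit_iff_isUnit_det _).mp hU
  have hinvm : (1 - Qmu μ)⁻¹ *ᵥ (fun _ => 1) = mvec t := by
    calc (1 - Qmu μ)⁻¹ *ᵥ (fun _ => 1)
        = (1 - Qmu μ)⁻¹ *ᵥ ((1 - Qmu μ) *ᵥ mvec t) := by rw [hm]
      _ = ((1 - Qmu μ)⁻¹ * (1 - Qmu μ)) *ᵥ mvec t := Matrix.mulVec_mulVec _ _ _
      _ = mvec t := by rw [Matrix.nonsing_inv_mul _ hdet, Matrix.one_mulVec]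
  -- the sum
  have hsum : ∑ X, mvec t X = 304 - 100 * t := by
    have hdecomp : ∀ X : Fin 103, mvec t X =
        (3 - t) + ((if X = 0 then t - 2 else 0) + (if X = 1 then t - 1 else 0)
          + (if X = 2 then t - 2 else 0)) := by
      intro X
      by_cases h0 : X = 0
      · subst h0
        simp [mvec, show (0 : Fin 103) ≠ 1 by decide, show (0 : Fin 103) ≠ 2 by decide]
        try ring
      by_cases h1 : X = 1
      · subst h1
        simp [mvec, show (1 : Fin 103) ≠ 0 by decide, show (1 : Fin 103) ≠ 2 by decide]
        try ring
      by_cases h2 : X = 2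
      · subst h2
        simp [mvec, show (2 : Fin 103) ≠ 0 by decide, show (2 : Fin 103) ≠ 1 by decide]
        try ring
      · simp [mvec, h0, h1, h2]
        try ring
    rw [Finset.sum_congr rfl (fun X _ => hdecomp X)]
    rw [Finset.sum_add_distrib, Finset.sum_add_distrib, Finset.sum_add_distrib]
    rw [Finset.sum_ite_eq' Finset.univ (0 : Fin 103) (fun _ => t - 2)]
    rw [Finset.sum_ite_eq' Finset.univ (1 : Fin 103) (fun _ => t - 1)]
    rw [Finset.sum_ite_eq' Finset.univ (2 : Fin 103) (fun _ => t - 2)]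
    simp [Finset.sum_const, Finset.card_univ]
    ring
  refine ⟨hU, ?_, ?_, by norm_num, ?_⟩
  · rw [hinvm, hsum]
  · intro ν hν
    have h1 : (1 / 2 : ℝ) ^ ν < (1 / 2 : ℝ) ^ μ :=
      pow_lt_pow_right_of_lt_one₀ (by norm_num) (by norm_num) hν
    have : (0 : ℝ) < 103 := by norm_num
    rw [div_lt_div_iff_of_pos_right this]
    linarith
  · intro h2
    have hle : t ≤ (1 / 2 : ℝ) ^ 2 := pow_le_pow_of_le_one (by norm_num) (by norm_num) h2
    have hpos : (0 : ℝ) < 304 - 100 * t := by norm_num at hle ⊢; linarith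
    rw [div_lt_one hpos]
    norm_num at hle ⊢
    linarith
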